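/- Let fL, fU : ℝⁿ → ℝ be convex functions with fL ≤ fU pointwise, g_j : ℝⁿ → ℝ convex for j = 1,…,m, X = {x : g_j(x) ≤ 0 for all j}, 0 ≤ εL ≤ εU, and x* ∈ X. Suppose there exist μL, μU ≥ 0 with μL + μU > 0, λ_j ≥ 0 with λ_j g_j(x*) = 0 for all j, subgradients zL ∈ ∂fL(x*), zU ∈ ∂fU(x*), u_j ∈ ∂g_j(x*), and b ∈ ℝⁿ with ‖b‖ ≤ 1, such that μL·zL + μU·zU + Σ_j λ_j·u_j + (μL·εU + μU·εL)·b = 0. Then x* is a weakly E-quasi-LU-solution of the problem: there is no x ∈ X with fL(x) < fL(x*) − εU‖x − x*‖ and fU(x) < fU(x*) − εL‖x − x*‖. -/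

import Mathlib

/-- The convex subdifferential of φ at x*. -/
def subdiff {n : ℕ} (φ : EuclideanSpace ℝ (Fin n) → ℝ)
    (xs : EuclideanSpace ℝ (Fin n)) : Set (EuclideanSpace ℝ (Fin n)) :=
  {v | ∀ x, φ x - φ xs ≥ (inner ℝ v (x - xs) : ℝ)}

theorem KKT_sufficient_weakly_E_quasi_LU (n m : ℕ)
    (fL fU : EuclideanSpace ℝ (Fin n) → ℝ)
    (hfL : ConvexOn ℝ Set.univ fL) (hfU : ConvexOn ℝ Set.univ fU)
    (hf : ∀ x, fL x ≤ fU x)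
    (g : Fin m → EuclideanSpace ℝ (Fin n) → ℝ)
    (hg : ∀ j, ConvexOn ℝ Set.univ (g j))
    (εL εU : ℝ) (hεL : 0 ≤ εL) (hε : εL ≤ εU)
    (xs : EuclideanSpace ℝ (Fin n)) (hxs : ∀ j, g j xs ≤ 0)
    (μL μU : ℝ) (hμL : 0 ≤ μL) (hμU : 0 ≤ μU) (hμ : 0 < μL + μU)
    (lam : Fin m → ℝ) (hlam : ∀ j, 0 ≤ lam j) (hcomp : ∀ j, lam j * g j xs = 0)
    (zL zU : EuclideanSpace ℝ (Fin n)) (hzL : zL ∈ subdiff fL xs) (hzU : zU ∈ subdiff fU xs)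
    (u : Fin m → EuclideanSpace ℝ (Fin n)) (hu : ∀ j, u j ∈ subdiff (g j) xs)
    (b : EuclideanSpace ℝ (Fin n)) (hb : ‖b‖ ≤ 1)
    (heq : μL • zL + μU • zU + ∑ j, lam j • u j + (μL * εU + μU * εL) • b = 0) :
    ¬ ∃ x, (∀ j, g j x ≤ 0) ∧
      fL x < fL xs - εU * ‖x - xs‖ ∧ fU x < fU xs - εL * ‖x - xs‖ := by
  rintro ⟨x, hgx, h1, h2⟩
  set d : EuclideanSpace ℝ (Fin n) := x - xs with hd
  have hkey : μL * (inner ℝ zL d : ℝ) + μU * (inner ℝ zU d : ℝ)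
      + (∑ j, lam j * (inner ℝ (u j) d : ℝ)) + (μL * εU + μU * εL) * (inner ℝ b d : ℝ) = 0 := by
    have h : (inner ℝ (μL • zL + μU • zU + ∑ j, lam j • u j + (μL * εU + μU * εL) • b) d : ℝ) = 0 := by
      rw [heq]; exact inner_zero_left d
    rw [inner_add_left, inner_add_left, inner_add_left, sum_inner] at h
    simp only [real_inner_smul_left] at h
    exact h
  have hzLd : (inner ℝ zL d : ℝ) ≤ fL x - fL xs := hzL x
  have hzUd : (inner ℝ zU d : ℝ) ≤ fU x - fU xs := hzU x
  have hsum : (∑ j, lam j * (inner ℝ (u j) d : ℝ)) ≤ 0 := by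
    apply Finset.sum_nonpos
    intro j _
    have h1 : (inner ℝ (u j) d : ℝ) ≤ g j x - g j xs := hu j x
    have h2 : lam j * (inner ℝ (u j) d : ℝ) ≤ lam j * (g j x - g j xs) :=
      mul_le_mul_of_nonneg_left h1 (hlam j)
    have h3 : lam j * (g j x - g j xs) = lam j * g j x := by
      have := hcomp j; ring_nf; ring_nf at this; linarith
    have h4 : lam j * g j x ≤ 0 :=
      mul_nonpos_of_nonneg_of_nonpos (hlam j) (hgx j)
    linarith
  have hbd : (inner ℝ b d : ℝ) ≤ ‖d‖ := by
    calc (inner ℝ b d : ℝ) ≤ ‖b‖ * ‖d‖ := real_inner_le_norm b d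
      _ ≤ 1 * ‖d‖ := mul_le_mul_of_nonneg_right hb (norm_nonneg d)
      _ = ‖d‖ := one_mul _
  have hεU : 0 ≤ εU := le_trans hεL hε
  have hcoef : 0 ≤ μL * εU + μU * εL :=
    add_nonneg (mul_nonneg hμL hεU) (mul_nonneg hμU hεL)
  have hbd' : (μL * εU + μU * εL) * (inner ℝ b d : ℝ) ≤ (μL * εU + μU * εL) * ‖d‖ :=
    mul_le_mul_of_nonneg_left hbd hcoef
  have h1' : fL x - fL xs < -(εU * ‖d‖) := by rw [hd]; linarith
  have h2' : fU x - fU xs < -(εL * ‖d‖) := by rw [hd]; linarith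
  have hcases : 0 < μL ∨ 0 < μU := by
    by_contra hc
    push_neg at hc
    linarith [hc.1, hc.2]
  rcases hcases with hpos | hpos
  · have t1 : μL * (inner ℝ zL d : ℝ) < μL * (-(εU * ‖d‖)) := by
      have : (inner ℝ zL d : ℝ) < -(εU * ‖d‖) := lt_of_le_of_lt hzLd h1'
      exact mul_lt_mul_of_pos_left this hpos
    have t2 : μU * (inner ℝ zU d : ℝ) ≤ μU * (-(εL * ‖d‖)) := by
      have : (inner ℝ zU d : ℝ) ≤ -(εL * ‖d‖) := le_of_lt (lt_of_le_of_lt hzUd h2')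
      exact mul_le_mul_of_nonneg_left this hμU
    nlinarith
  · have t1 : μL * (inner ℝ zL d : ℝ) ≤ μL * (-(εU * ‖d‖)) := by
      have : (inner ℝ zL d : ℝ) ≤ -(εU * ‖d‖) := le_of_lt (lt_of_le_of_lt hzLd h1')
      exact mul_le_mul_of_nonneg_left this hμL
    have t2 : μU * (inner ℝ zU d : ℝ) < μU * (-(εL * ‖d‖)) := by
      have : (inner ℝ zU d : ℝ) < -(εL * ‖d‖) := lt_of_le_of_lt hzUd h2'
      exact mul_lt_mul_of_pos_left this hpos
    nlinarith
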